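/- Let b and b' be unimodular symmetric bilinear forms over ℤ on ℤ^h. If there exist n : ℕ and a ℤ-linear isometry between b ⊕ H^{⊕n} (on (Fin h → ℤ) × (Fin 2 → ℤ)^n) and b' ⊕ H^{⊕n}, then there exist m : ℕ and a ℤ-linear isometry between b^nd_ext ⊕ H^{⊕m} (on K_b × (Fin 2 → ℤ)^m) and (b')^nd_ext ⊕ H^{⊕m}. In other words, if b and b' are stably isometric, then their exterior non-degenerate forms are stably isometric. -/
import Mathlib


/-- The hyperbolic form `H` over `ℤ` on `ℤ² = Fin 2 → ℤ`. -/
def hypForm (x y : Fin 2 → ℤ) : ℤ := x 0 * y 1 + x 1 * y 0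

/-- The exterior submodule `K_b = {x | Even (b x x)}` of a symmetric bilinear form `b`. -/
def extSub {h : ℕ} (b : (Fin h → ℤ) →ₗ[ℤ] (Fin h → ℤ) →ₗ[ℤ] ℤ)
    (hsymm : ∀ x y, b x y = b y x) : Submodule ℤ (Fin h → ℤ) where
  carrier := {x | Even (b x x)}
  zero_mem' := by simp
  add_mem' := by
    intro x y hx hy
    have e : b (x + y) (x + y) = (b x x + b y y) + 2 * b x y := by
      simp only [map_add, LinearMap.add_apply]
      rw [hsymm y x]; ring
    simp only [Set.mem_setOf_eq] at *
    rw [e]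
    exact (hx.add hy).add (even_two_mul _)
  smul_mem' := by
    intro c x hx
    have e : b (c • x) (c • x) = c * (c * b x x) := by
      simp only [map_smul, LinearMap.smul_apply, smul_eq_mul]
    simp only [Set.mem_setOf_eq] at *
    rw [e]
    exact (hx.mul_left c).mul_left c

/-- The Gram matrix of a bilinear form on `ℤ^h` with respect to the standard basis. -/
def gram {h : ℕ} (b : (Fin h → ℤ) →ₗ[ℤ] (Fin h → ℤ) →ₗ[ℤ] ℤ) :
    Matrix (Fin h) (Fin h) ℤ :=
  Matrix.of fun i j => b (Pi.single i 1) (Pi.single j 1)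

/-- If two unimodular symmetric bilinear forms `b, b'` on `ℤ^h` are
stably isometric (isometric after adding `n` hyperbolic summands), then their exterior
non-degenerate forms `b^nd_ext` and `(b')^nd_ext` are stably isometric. -/
theorem stmt2 (h : ℕ) (b b' : (Fin h → ℤ) →ₗ[ℤ] (Fin h → ℤ) →ₗ[ℤ] ℤ)
    (hsymm : ∀ x y, b x y = b y x) (hsymm' : ∀ x y, b' x y = b' y x)
    (huni : (gram b).det = 1 ∨ (gram b).det = -1)
    (huni' : (gram b').det = 1 ∨ (gram b').det = -1)
    (hstab : ∃ (n : ℕ)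
      (e : ((Fin h → ℤ) × (Fin n → Fin 2 → ℤ)) ≃ₗ[ℤ] ((Fin h → ℤ) × (Fin n → Fin 2 → ℤ))),
      ∀ v w : (Fin h → ℤ) × (Fin n → Fin 2 → ℤ),
        b' (e v).1 (e w).1 + ∑ k, hypForm ((e v).2 k) ((e w).2 k)
          = b v.1 w.1 + ∑ k, hypForm (v.2 k) (w.2 k)) :
    ∃ (m : ℕ)
      (e : (↥(extSub b hsymm) × (Fin m → Fin 2 → ℤ)) ≃ₗ[ℤ]
           (↥(extSub b' hsymm') × (Fin m → Fin 2 → ℤ))),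
      ∀ v w : ↥(extSub b hsymm) × (Fin m → Fin 2 → ℤ),
        b' ((e v).1 : Fin h → ℤ) ((e w).1 : Fin h → ℤ)
            + ∑ k, hypForm ((e v).2 k) ((e w).2 k)
          = b (v.1 : Fin h → ℤ) (w.1 : Fin h → ℤ) + ∑ k, hypForm (v.2 k) (w.2 k) := by
  obtain ⟨n, e, he⟩ := hstab
  have hevenS : ∀ (f : Fin n → Fin 2 → ℤ), Even (∑ k, hypForm (f k) (f k)) := by
    intro f
    refine Finset.even_sum _ fun k _ => ⟨f k 0 * f k 1, ?_⟩
    unfold hypForm; ring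
  have key : ∀ v : (Fin h → ℤ) × (Fin n → Fin 2 → ℤ),
      Even (b v.1 v.1) → Even (b' (e v).1 (e v).1) := by
    intro v hv
    have h1 := he v v
    have h2 : b' (e v).1 (e v).1
        = b v.1 v.1 + (∑ k, hypForm (v.2 k) (v.2 k))
          - (∑ k, hypForm ((e v).2 k) ((e v).2 k)) := by linarith
    rw [h2]
    exact (hv.add (hevenS _)).sub (hevenS _)
  have key' : ∀ v : (Fin h → ℤ) × (Fin n → Fin 2 → ℤ),
      Even (b' v.1 v.1) → Even (b (e.symm v).1 (e.symm v).1) := by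
    intro v hv
    have h1 := he (e.symm v) (e.symm v)
    rw [e.apply_symm_apply] at h1
    have h2 : b (e.symm v).1 (e.symm v).1
        = b' v.1 v.1 + (∑ k, hypForm (v.2 k) (v.2 k))
          - (∑ k, hypForm ((e.symm v).2 k) ((e.symm v).2 k)) := by linarith
    rw [h2]
    exact (hv.add (hevenS _)).sub (hevenS _)
  refine ⟨n,
    { toFun := fun p => (⟨(e (p.1.1, p.2)).1, key (p.1.1, p.2) p.1.2⟩, (e (p.1.1, p.2)).2)
      invFun := fun p =>
        (⟨(e.symm (p.1.1, p.2)).1, key' (p.1.1, p.2) p.1.2⟩, (e.symm (p.1.1, p.2)).2)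
      map_add' := by
        intro p q
        have : ((p + q).1.1, (p + q).2) = ((p.1.1 : Fin h → ℤ), p.2) + (q.1.1, q.2) := rfl
        simp only [this, map_add, Prod.ext_iff, Subtype.ext_iff]
        exact ⟨rfl, rfl⟩
      map_smul' := by
        intro c p
        have : ((c • p).1.1, (c • p).2) = c • ((p.1.1 : Fin h → ℤ), p.2) := rfl
        simp only [this, map_smul, Prod.ext_iff, Subtype.ext_iff, RingHom.id_apply]
        exact ⟨rfl, rfl⟩
      left_inv := by
        intro p
        have h1 : (((e (p.1.1, p.2)).1 : Fin h → ℤ), (e (p.1.1, p.2)).2)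
            = e (p.1.1, p.2) := rfl
        simp only [h1, e.symm_apply_apply, Prod.ext_iff, Subtype.ext_iff]
      right_inv := by
        intro p
        have h1 : (((e.symm (p.1.1, p.2)).1 : Fin h → ℤ), (e.symm (p.1.1, p.2)).2)
            = e.symm (p.1.1, p.2) := rfl
        simp only [h1, e.apply_symm_apply, Prod.ext_iff, Subtype.ext_iff] },
    ?_⟩
  intro v w
  exact he (v.1.1, v.2) (w.1.1, w.2)
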